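/- Let Lb, Ub be reals with Lb < 0 < Ub. The minimizer over p ∈ [0,1] of f(p) = max((1-p)·max(Ub,0), p·max(-Lb,0)) is p* = Ub/(Ub - Lb), and the minimal worst-case regret is -Lb·Ub/(Ub - Lb). -/

import Mathlib

/-- The minimax-regret mixed strategy: when `Lb < 0 < Ub`, the minimizer of
`f(p) = max((1-p)·max(Ub,0), p·max(-Lb,0))` over `[0,1]` is
`p* = Ub/(Ub - Lb)` with minimal worst-case regret `-Lb·Ub/(Ub - Lb)`. -/
theorem stmt_6 (Lb Ub : ℝ) (hL : Lb < 0) (hU : 0 < Ub) :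
    (∀ p : ℝ, 0 ≤ p → p ≤ 1 →
      max ((1 - Ub / (Ub - Lb)) * max Ub 0) ((Ub / (Ub - Lb)) * max (-Lb) 0)
        ≤ max ((1 - p) * max Ub 0) (p * max (-Lb) 0)) ∧
    max ((1 - Ub / (Ub - Lb)) * max Ub 0) ((Ub / (Ub - Lb)) * max (-Lb) 0)
      = -Lb * Ub / (Ub - Lb) := by
  have hD : 0 < Ub - Lb := by linarith
  have hU0 : max Ub 0 = Ub := max_eq_left hU.le
  have hL0 : max (-Lb) 0 = -Lb := max_eq_left (by linarith)
  have h1 : (1 - Ub / (Ub - Lb)) * max Ub 0 = -Lb * Ub / (Ub - Lb) := by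
    rw [hU0]; field_simp; ring
  have h2 : (Ub / (Ub - Lb)) * max (-Lb) 0 = -Lb * Ub / (Ub - Lb) := by
    rw [hL0]; field_simp
  rw [h1, h2, max_self]
  refine ⟨fun p hp0 hp1 => ?_, rfl⟩
  rw [hU0, hL0]
  rcases le_or_gt p (Ub / (Ub - Lb)) with h | h
  · refine le_max_of_le_left ?_
    rw [div_le_iff₀ hD]
    have : p * Ub ≤ Ub / (Ub - Lb) * Ub := mul_le_mul_of_nonneg_right h hU.le
    rw [div_mul_eq_mul_div, le_div_iff₀ hD] at this
    nlinarith
  · refine le_max_of_le_right ?_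
    rw [div_le_iff₀ hD]
    have : Ub / (Ub - Lb) * (-Lb) ≤ p * (-Lb) :=
      mul_le_mul_of_nonneg_right h.le (by linarith)
    rw [div_mul_eq_mul_div, div_le_iff₀ hD] at this
    nlinarith
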